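/- Let (D_cf, C_cf) be any cut-free cycle-normal CLKID^ω_a proof of the sequent Add2(x,y,z) ⊢ Add1(x,y,z). The rightmost path starting from any node labeled by an index sequent in the tree-unfolding of (D_cf, C_cf) is infinite. -/

import Mathlib

namespace CLKID

/-- Terms of the language: variables, the constant `0`, and the unary function `s`. -/
inductive Tm : Type where
  | var : ℕ → Tm
  | zero : Tm
  | s : Tm → Tm
deriving DecidableEq

/-- `sIter n t` is the term `s^n t`. -/
def sIter : ℕ → Tm → Tm
  | 0, t => t
  | n + 1, t => Tm.s (sIter n t)

/-- Substitution on terms. -/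
def Tm.subst (θ : ℕ → Tm) : Tm → Tm
  | .var x => θ x
  | .zero => .zero
  | .s t => .s (t.subst θ)

/-- Free variables of a term. -/
def Tm.fv : Tm → Set ℕ
  | .var x => {x}
  | .zero => ∅
  | .s t => t.fv

/-- Subterms of a term. -/
def Tm.sub : Tm → Set Tm
  | .var x => {Tm.var x}
  | .zero => {Tm.zero}
  | .s t => insert (Tm.s t) t.sub

/-- The variable of a term (`none` if the term is of the form `s^n 0`). -/
def Tm.varOf : Tm → Option ℕ
  | .var x => some x
  | .zero => none
  | .s t => t.varOf

/-- Formulas: equations, the two inductive-predicate atoms `Add1`/`Add2`,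
    and the usual first-order connectives and quantifiers. -/
inductive Fm : Type where
  | eq : Tm → Tm → Fm
  | add1 : Tm → Tm → Tm → Fm
  | add2 : Tm → Tm → Tm → Fm
  | not : Fm → Fm
  | and : Fm → Fm → Fm
  | or : Fm → Fm → Fm
  | imp : Fm → Fm → Fm
  | all : ℕ → Fm → Fm
  | ex : ℕ → Fm → Fm
deriving DecidableEq

/-- Substitution on formulas. -/
def Fm.subst (θ : ℕ → Tm) : Fm → Fm
  | .eq t u => .eq (t.subst θ) (u.subst θ)
  | .add1 a b c => .add1 (a.subst θ) (b.subst θ) (c.subst θ)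
  | .add2 a b c => .add2 (a.subst θ) (b.subst θ) (c.subst θ)
  | .not φ => .not (φ.subst θ)
  | .and φ ψ => .and (φ.subst θ) (ψ.subst θ)
  | .or φ ψ => .or (φ.subst θ) (ψ.subst θ)
  | .imp φ ψ => .imp (φ.subst θ) (ψ.subst θ)
  | .all x φ => .all x (φ.subst (Function.update θ x (Tm.var x)))
  | .ex x φ => .ex x (φ.subst (Function.update θ x (Tm.var x)))

/-- Free variables of a formula. -/
def Fm.fv : Fm → Set ℕ
  | .eq t u => t.fv ∪ u.fv
  | .add1 a b c => a.fv ∪ b.fv ∪ c.fv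
  | .add2 a b c => a.fv ∪ b.fv ∪ c.fv
  | .not φ => φ.fv
  | .and φ ψ => φ.fv ∪ ψ.fv
  | .or φ ψ => φ.fv ∪ ψ.fv
  | .imp φ ψ => φ.fv ∪ ψ.fv
  | .all x φ => φ.fv \ {x}
  | .ex x φ => φ.fv \ {x}

/-- Terms occurring in a formula. -/
def Fm.tms : Fm → Set Tm
  | .eq t u => t.sub ∪ u.sub
  | .add1 a b c => a.sub ∪ b.sub ∪ c.sub
  | .add2 a b c => a.sub ∪ b.sub ∪ c.sub
  | .not φ => φ.tms
  | .and φ ψ => φ.tms ∪ ψ.tms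
  | .or φ ψ => φ.tms ∪ ψ.tms
  | .imp φ ψ => φ.tms ∪ ψ.tms
  | .all _ φ => φ.tms
  | .ex _ φ => φ.tms

/-- The substitution `[x := t]`. -/
def sub1 (x : ℕ) (t : Tm) : ℕ → Tm := fun y => if y = x then t else Tm.var y

/-- The simultaneous substitution `[v1 := t, v2 := u]`. -/
def sub2 (v1 v2 : ℕ) (t u : Tm) : ℕ → Tm :=
  fun z => if z = v1 then t else if z = v2 then u else Tm.var z

/-- `≡_Γ`: the smallest congruence relation on terms containing all pairs `(t, u)`
    with the equation `t = u` in `Γ`. -/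
inductive EqvTm (Γ : Set Fm) : Tm → Tm → Prop where
  | base {t u : Tm} : Fm.eq t u ∈ Γ → EqvTm Γ t u
  | refl (t : Tm) : EqvTm Γ t t
  | symm {t u : Tm} : EqvTm Γ t u → EqvTm Γ u t
  | trans {t u v : Tm} : EqvTm Γ t u → EqvTm Γ u v → EqvTm Γ t v
  | sCongr {t u : Tm} : EqvTm Γ t u → EqvTm Γ (Tm.s t) (Tm.s u)

/-- `t ~_Γ u` : `s^n t ≡_Γ s^m u` for some naturals `n`, `m`. -/
def DepTm (Γ : Set Fm) (t u : Tm) : Prop := ∃ n m : ℕ, EqvTm Γ (sIter n t) (sIter m u)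

/-- A sequent: a pair of finite sets of formulas. -/
structure Seq where
  ant : Finset Fm
  suc : Finset Fm

/-- The antecedent of a sequent, as a set of formulas. -/
def antSet (S : Seq) : Set Fm := ↑S.ant

/-- `[Γ]` from Lemma on chains: `{ s^n t1 = s^n t2 | t1 = t2 ∈ Γ or t2 = t1 ∈ Γ }`. -/
def brkt (Γ : Set Fm) : Set Fm :=
  {φ | ∃ (n : ℕ) (t1 t2 : Tm), φ = Fm.eq (sIter n t1) (sIter n t2) ∧
        (Fm.eq t1 t2 ∈ Γ ∨ Fm.eq t2 t1 ∈ Γ)}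

/-- `B1(Γ ⊢ Δ)` : second arguments of `Add1` atoms in the consequent. -/
def B1 (S : Seq) : Set Tm := {b | ∃ a c, Fm.add1 a b c ∈ S.suc}

/-- `C(Γ ⊢ Δ)` : third arguments of `Add2` atoms in the antecedent
    or `Add1` atoms in the consequent. -/
def Cset (S : Seq) : Set Tm :=
  {c | (∃ a b, Fm.add2 a b c ∈ S.ant) ∨ (∃ a b, Fm.add1 a b c ∈ S.suc)}

/-- Index sequent. -/
def IndexSequent (S : Seq) : Prop :=
  (∀ t ∈ B1 S, ∀ u ∈ Cset S, ¬ DepTm (antSet S) t u) ∧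
  (∀ b ∈ B1 S, ∀ b' ∈ B1 S, ∀ n m : ℕ, EqvTm (antSet S) (sIter n b) (sIter m b') → n = m)

/-! ## The cyclic proof systems `CLKID^ω` and `CLKID^ω_a` -/

/-- Rule labels; each label carries the instance data needed to describe the
    rule application (principal formulas, substitutions, case variables, ...).
    `bud` labels bud leaves of cyclic derivation trees. -/
inductive Rule : Type where
  | ax
  | weak
  | cut (φ : Fm)
  | subst (θ : ℕ → Tm)
  | negL (φ : Fm)
  | negR (φ : Fm)
  | andL (φ ψ : Fm)
  | andR (φ ψ : Fm)
  | orL (φ ψ : Fm)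
  | orR (φ ψ : Fm)
  | impL (φ ψ : Fm)
  | impR (φ ψ : Fm)
  | allL (x : ℕ) (t : Tm) (φ : Fm)
  | allR (x : ℕ) (φ : Fm)
  | exL (x : ℕ) (φ : Fm)
  | exR (x : ℕ) (t : Tm) (φ : Fm)
  | eqR (t : Tm)
  | eqL (v1 v2 : ℕ) (t u : Tm)
  | eqLa (v1 v2 : ℕ) (t u : Tm)
  | add1R1
  | add1R2 (a b c : Tm)
  | add2R1
  | add2R2 (a b c : Tm)
  | caseAdd1 (a b c : Tm) (x y z : ℕ)
  | caseAdd2 (a b c : Tm) (x y z : ℕ)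
  | bud

/-- `Inf r S L` : the sequent `S` follows from the list of premises `L`
    by the rule (instance) `r`. -/
inductive Inf : Rule → Seq → List Seq → Prop where
  | ax {Γ Δ : Finset Fm} :
      (Γ ∩ Δ).Nonempty → Inf .ax ⟨Γ, Δ⟩ []
  | weak {Γ Δ Γ' Δ' : Finset Fm} :
      Γ' ⊆ Γ → Δ' ⊆ Δ → Inf .weak ⟨Γ, Δ⟩ [⟨Γ', Δ'⟩]
  | cut {Γ Δ : Finset Fm} {φ : Fm} :
      Inf (.cut φ) ⟨Γ, Δ⟩ [⟨Γ, insert φ Δ⟩, ⟨insert φ Γ, Δ⟩]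
  | subst {Γ Δ : Finset Fm} {θ : ℕ → Tm} :
      Inf (.subst θ) ⟨Γ.image (Fm.subst θ), Δ.image (Fm.subst θ)⟩ [⟨Γ, Δ⟩]
  | negL {Γ Δ : Finset Fm} {φ : Fm} :
      Inf (.negL φ) ⟨insert (.not φ) Γ, Δ⟩ [⟨Γ, insert φ Δ⟩]
  | negR {Γ Δ : Finset Fm} {φ : Fm} :
      Inf (.negR φ) ⟨Γ, insert (.not φ) Δ⟩ [⟨insert φ Γ, Δ⟩]
  | andL {Γ Δ : Finset Fm} {φ ψ : Fm} :
      Inf (.andL φ ψ) ⟨insert (.and φ ψ) Γ, Δ⟩ [⟨insert φ (insert ψ Γ), Δ⟩]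
  | andR {Γ Δ : Finset Fm} {φ ψ : Fm} :
      Inf (.andR φ ψ) ⟨Γ, insert (.and φ ψ) Δ⟩ [⟨Γ, insert φ Δ⟩, ⟨Γ, insert ψ Δ⟩]
  | orL {Γ Δ : Finset Fm} {φ ψ : Fm} :
      Inf (.orL φ ψ) ⟨insert (.or φ ψ) Γ, Δ⟩ [⟨insert φ Γ, Δ⟩, ⟨insert ψ Γ, Δ⟩]
  | orR {Γ Δ : Finset Fm} {φ ψ : Fm} :
      Inf (.orR φ ψ) ⟨Γ, insert (.or φ ψ) Δ⟩ [⟨Γ, insert φ (insert ψ Δ)⟩]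
  | impL {Γ Δ : Finset Fm} {φ ψ : Fm} :
      Inf (.impL φ ψ) ⟨insert (.imp φ ψ) Γ, Δ⟩ [⟨Γ, insert φ Δ⟩, ⟨insert ψ Γ, Δ⟩]
  | impR {Γ Δ : Finset Fm} {φ ψ : Fm} :
      Inf (.impR φ ψ) ⟨Γ, insert (.imp φ ψ) Δ⟩ [⟨insert φ Γ, insert ψ Δ⟩]
  | allL {Γ Δ : Finset Fm} {x : ℕ} {t : Tm} {φ : Fm} :
      Inf (.allL x t φ) ⟨insert (.all x φ) Γ, Δ⟩ [⟨insert (φ.subst (sub1 x t)) Γ, Δ⟩]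
  | allR {Γ Δ : Finset Fm} {x : ℕ} {φ : Fm} :
      (∀ ψ ∈ Γ ∪ Δ, x ∉ Fm.fv ψ) →
      Inf (.allR x φ) ⟨Γ, insert (.all x φ) Δ⟩ [⟨Γ, insert φ Δ⟩]
  | exL {Γ Δ : Finset Fm} {x : ℕ} {φ : Fm} :
      (∀ ψ ∈ Γ ∪ Δ, x ∉ Fm.fv ψ) →
      Inf (.exL x φ) ⟨insert (.ex x φ) Γ, Δ⟩ [⟨insert φ Γ, Δ⟩]
  | exR {Γ Δ : Finset Fm} {x : ℕ} {t : Tm} {φ : Fm} :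
      Inf (.exR x t φ) ⟨Γ, insert (.ex x φ) Δ⟩ [⟨Γ, insert (φ.subst (sub1 x t)) Δ⟩]
  | eqR {Γ Δ : Finset Fm} {t : Tm} :
      Inf (.eqR t) ⟨Γ, insert (.eq t t) Δ⟩ []
  | eqL {Γ Δ : Finset Fm} {v1 v2 : ℕ} {t u : Tm} :
      Inf (.eqL v1 v2 t u)
        ⟨insert (.eq t u) (Γ.image (Fm.subst (sub2 v1 v2 t u))),
          Δ.image (Fm.subst (sub2 v1 v2 t u))⟩
        [⟨Γ.image (Fm.subst (sub2 v1 v2 u t)), Δ.image (Fm.subst (sub2 v1 v2 u t))⟩]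
  | eqLa {Γ Δ : Finset Fm} {v1 v2 : ℕ} {t u : Tm} :
      Inf (.eqLa v1 v2 t u)
        ⟨insert (.eq t u) (Γ.image (Fm.subst (sub2 v1 v2 t u))),
          Δ.image (Fm.subst (sub2 v1 v2 t u))⟩
        [⟨insert (.eq t u) (Γ.image (Fm.subst (sub2 v1 v2 u t))),
          Δ.image (Fm.subst (sub2 v1 v2 u t))⟩]
  | add1R1 {Γ Δ : Finset Fm} {b : Tm} :
      Inf .add1R1 ⟨Γ, insert (.add1 .zero b b) Δ⟩ []
  | add1R2 {Γ Δ : Finset Fm} {a b c : Tm} :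
      Inf (.add1R2 a b c) ⟨Γ, insert (.add1 (.s a) b (.s c)) Δ⟩ [⟨Γ, insert (.add1 a b c) Δ⟩]
  | add2R1 {Γ Δ : Finset Fm} {b : Tm} :
      Inf .add2R1 ⟨Γ, insert (.add2 .zero b b) Δ⟩ []
  | add2R2 {Γ Δ : Finset Fm} {a b c : Tm} :
      Inf (.add2R2 a b c) ⟨Γ, insert (.add2 (.s a) b c) Δ⟩ [⟨Γ, insert (.add2 a (.s b) c) Δ⟩]
  | caseAdd1 {Γ Δ : Finset Fm} {a b c : Tm} {x y z : ℕ} :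
      x ≠ y → x ≠ z → y ≠ z →
      (∀ ψ ∈ insert (Fm.add1 a b c) (Γ ∪ Δ), x ∉ Fm.fv ψ ∧ y ∉ Fm.fv ψ ∧ z ∉ Fm.fv ψ) →
      Inf (.caseAdd1 a b c x y z) ⟨insert (.add1 a b c) Γ, Δ⟩
        [⟨insert (.eq a .zero) (insert (.eq b (.var y)) (insert (.eq c (.var y)) Γ)), Δ⟩,
         ⟨insert (.eq a (.s (.var x))) (insert (.eq b (.var y)) (insert (.eq c (.s (.var z)))
            (insert (.add1 (.var x) (.var y) (.var z)) Γ))), Δ⟩]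
  | caseAdd2 {Γ Δ : Finset Fm} {a b c : Tm} {x y z : ℕ} :
      x ≠ y → x ≠ z → y ≠ z →
      (∀ ψ ∈ insert (Fm.add2 a b c) (Γ ∪ Δ), x ∉ Fm.fv ψ ∧ y ∉ Fm.fv ψ ∧ z ∉ Fm.fv ψ) →
      Inf (.caseAdd2 a b c x y z) ⟨insert (.add2 a b c) Γ, Δ⟩
        [⟨insert (.eq a .zero) (insert (.eq b (.var y)) (insert (.eq c (.var y)) Γ)), Δ⟩,
         ⟨insert (.eq a (.s (.var x))) (insert (.eq b (.var y)) (insert (.eq c (.var z))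
            (insert (.add2 (.var x) (.s (.var y)) (.var z)) Γ))), Δ⟩]

/-- A labeling of tree nodes (finite sequences of naturals) by sequents and rules;
    `none` means the node is not in the tree. -/
abbrev Lbl : Type := List ℕ → Option (Seq × Rule)

/-- The children of `σ` are labeled exactly by the premise list `prems`. -/
def childrenOK (f : Lbl) (σ : List ℕ) (prems : List Seq) : Prop :=
  (∀ i : Fin prems.length, ∃ r', f (σ ++ [(i : ℕ)]) = some (prems.get i, r')) ∧
  (∀ i : ℕ, prems.length ≤ i → f (σ ++ [i]) = none)

/-- Derivation trees (possibly infinite): prefix-closed domain, each non-bud node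
    is the conclusion of a rule whose premises label its children, buds are leaves. -/
structure DTree where
  label : Lbl
  root_def : label [] ≠ none
  prefix_closed : ∀ σ τ : List ℕ, label (σ ++ τ) ≠ none → label σ ≠ none
  wf : ∀ σ S r, label σ = some (S, r) →
    (r = Rule.bud ∧ ∀ i : ℕ, label (σ ++ [i]) = none) ∨
    (r ≠ Rule.bud ∧ ∃ prems, Inf r S prems ∧ childrenOK label σ prems)

/-- `σ` is a bud of the labeling `f`. -/
def budAt (f : Lbl) (σ : List ℕ) : Prop := ∃ S, f σ = some (S, Rule.bud)

/-- `σ` is an inner node of `f` labeled with the sequent `S`. -/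
def innerWith (f : Lbl) (σ : List ℕ) (S : Seq) : Prop :=
  ∃ r, f σ = some (S, r) ∧ r ≠ Rule.bud

/-- A pre-proof: a finite derivation tree together with a function assigning to
    each bud a companion, i.e. an inner node labeled with the same sequent. -/
structure PreProof where
  D : DTree
  fin : {σ : List ℕ | D.label σ ≠ none}.Finite
  C : List ℕ → List ℕ
  comp : ∀ σ S, D.label σ = some (S, Rule.bud) → innerWith D.label (C σ) S

/-- Cycle-normality: every companion is an ancestor of its bud. -/
def PreProof.CycleNormal (P : PreProof) : Prop :=
  ∀ σ S, P.D.label σ = some (S, Rule.bud) → P.C σ <+: σ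

/-- `T` is the tree-unfolding of the pre-proof `P`: it agrees with `P.D` on
    non-bud nodes, below a bud it continues as below the bud's companion, and it
    is empty on nodes not in `P.D` having no bud prefix. -/
def IsUnfolding (P : PreProof) (T : Lbl) : Prop :=
  (∀ σ, P.D.label σ ≠ none → ¬ budAt P.D.label σ → T σ = P.D.label σ) ∧
  (∀ σ₁ σ₂ : List ℕ, budAt P.D.label σ₁ → T (σ₁ ++ σ₂) = T (P.C σ₁ ++ σ₂)) ∧
  (∀ σ, P.D.label σ = none → (∀ σ₁, σ₁ <+: σ → ¬ budAt P.D.label σ₁) → T σ = none)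

/-- An infinite path in the labeling `f`. -/
def IsInfPath (f : Lbl) (p : ℕ → List ℕ) : Prop :=
  (∀ i, f (p i) ≠ none) ∧ (∀ i, ∃ n : ℕ, p (i + 1) = p i ++ [n])

/-- Atomic formulas with an inductive predicate. -/
def isIndAtom (φ : Fm) : Prop :=
  (∃ a b c, φ = Fm.add1 a b c) ∨ (∃ a b c, φ = Fm.add2 a b c)

/-- A progressing trace step: the traced formula is the principal formula of a
    case rule and its successor (in the corresponding case distinction, child `j`)
    is a case-descendant. -/
def progStep : Rule → ℕ → Fm → Fm → Prop := fun r j τ τ' =>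
  match r with
  | .caseAdd1 a b c x y z =>
      τ = Fm.add1 a b c ∧ j = 1 ∧ τ' = Fm.add1 (.var x) (.var y) (.var z)
  | .caseAdd2 a b c x y z =>
      τ = Fm.add2 a b c ∧ j = 1 ∧ τ' = Fm.add2 (.var x) (.s (.var y)) (.var z)
  | _ => False

/-- The trace connection relation between the traced formula at a conclusion of a
    rule `r` and the traced formula at its `j`-th premise. -/
def connStep : Rule → ℕ → Fm → Fm → Prop := fun r j τ τ' =>
  match r with
  | .subst θ => τ = Fm.subst θ τ'
  | .eqL v1 v2 t u =>
      ∃ F : Fm, τ = Fm.subst (sub2 v1 v2 t u) F ∧ τ' = Fm.subst (sub2 v1 v2 u t) F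
  | .eqLa v1 v2 t u =>
      ∃ F : Fm, τ = Fm.subst (sub2 v1 v2 t u) F ∧ τ' = Fm.subst (sub2 v1 v2 u t) F
  | .caseAdd1 a b c x y z => τ' = τ ∨ progStep (.caseAdd1 a b c x y z) j τ τ'
  | .caseAdd2 a b c x y z => τ' = τ ∨ progStep (.caseAdd2 a b c x y z) j τ τ'
  | _ => τ' = τ

/-- `τ` is a trace following the tail from `k` of the path `p` in `f`. -/
def IsTraceFrom (f : Lbl) (p : ℕ → List ℕ) (k : ℕ) (τ : ℕ → Fm) : Prop :=
  ∀ i, k ≤ i →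
    ∃ (S : Seq) (r : Rule) (j : ℕ), f (p i) = some (S, r) ∧ τ i ∈ S.ant ∧ isIndAtom (τ i) ∧
      p (i + 1) = p i ++ [j] ∧ connStep r j (τ i) (τ (i + 1))

/-- The trace `τ` progresses at position `i` of the path `p`. -/
def progAt (f : Lbl) (p : ℕ → List ℕ) (τ : ℕ → Fm) (i : ℕ) : Prop :=
  ∃ (S : Seq) (r : Rule) (j : ℕ), f (p i) = some (S, r) ∧ p (i + 1) = p i ++ [j] ∧
    progStep r j (τ i) (τ (i + 1))

/-- The global trace condition for a (possibly infinite) labeling `f`. -/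
def GTC (f : Lbl) : Prop :=
  ∀ p : ℕ → List ℕ, IsInfPath f p →
    ∃ (k : ℕ) (τ : ℕ → Fm), IsTraceFrom f p k τ ∧
      ∀ n : ℕ, ∃ i, n ≤ i ∧ k ≤ i ∧ progAt f p τ i

/-- A pre-proof is a proof when its tree-unfolding satisfies the
    global trace condition. -/
def PreProof.IsProof (P : PreProof) : Prop := ∃ T : Lbl, IsUnfolding P T ∧ GTC T

/-- Some rule satisfying `Q` occurs in the labeling `f`. -/
def usesRule (f : Lbl) (Q : Rule → Prop) : Prop := ∃ σ S r, f σ = some (S, r) ∧ Q r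

/-- No occurrence of (Cut). -/
def PreProof.CutFree (P : PreProof) : Prop :=
  ¬ usesRule P.D.label (fun r => ∃ φ, r = Rule.cut φ)

/-- No occurrence of (= L_a): the pre-proof is a `CLKID^ω` pre-proof. -/
def PreProof.NoEqLa (P : PreProof) : Prop :=
  ¬ usesRule P.D.label (fun r => ∃ v1 v2 t u, r = Rule.eqLa v1 v2 t u)

/-- No occurrence of (= L): the pre-proof is a `CLKID^ω_a` pre-proof. -/
def PreProof.NoEqL (P : PreProof) : Prop :=
  ¬ usesRule P.D.label (fun r => ∃ v1 v2 t u, r = Rule.eqL v1 v2 t u)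

/-- The conclusion of the pre-proof is the sequent `S`. -/
def PreProof.Concl (P : PreProof) (S : Seq) : Prop := ∃ r, P.D.label [] = some (S, r)

/-- Provability in `CLKID^ω`. -/
def ProvableW (S : Seq) : Prop :=
  ∃ P : PreProof, P.IsProof ∧ P.NoEqLa ∧ P.Concl S

/-- Provability in `CLKID^ω_a`. -/
def ProvableWa (S : Seq) : Prop :=
  ∃ P : PreProof, P.IsProof ∧ P.NoEqL ∧ P.Concl S

/-- Cut-free provability in `CLKID^ω`. -/
def CutFreeProvableW (S : Seq) : Prop :=
  ∃ P : PreProof, P.IsProof ∧ P.CutFree ∧ P.NoEqLa ∧ P.Concl S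

/-- The sequent `Add2(x, y, z) ⊢ Add1(x, y, z)`. -/
def goalSeq : Seq :=
  ⟨{Fm.add2 (Tm.var 0) (Tm.var 1) (Tm.var 2)}, {Fm.add1 (Tm.var 0) (Tm.var 1) (Tm.var 2)}⟩

/-- A cut-free cycle-normal `CLKID^ω_a` proof of `Add2(x,y,z) ⊢ Add1(x,y,z)`. -/
def IsCNProofOfGoal (P : PreProof) : Prop :=
  P.IsProof ∧ P.CutFree ∧ P.NoEqL ∧ P.CycleNormal ∧ P.Concl goalSeq

/-- The index of an `Add2` atom with second argument `b` in the sequent `S` is `⊥`. -/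
def IndexBot (S : Seq) (b : Tm) : Prop :=
  ∀ a' b' c', Fm.add1 a' b' c' ∈ S.suc → ¬ DepTm (antSet S) b b'

/-- `σ` is a switching point of `f`: the conclusion of a `(Case Add2)` rule whose
    principal formula has index `⊥`. -/
def SwitchingPoint (f : Lbl) (σ : List ℕ) : Prop :=
  ∃ S a b c x y z, f σ = some (S, Rule.caseAdd2 a b c x y z) ∧ IndexBot S b

/-- `σ` is the conclusion of a `(Case Add2)` rule in `f`. -/
def CaseAdd2At (f : Lbl) (σ : List ℕ) : Prop :=
  ∃ S a b c x y z, f σ = some (S, Rule.caseAdd2 a b c x y z)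

/-- The node `σ` of `f` is labeled with an index sequent. -/
def IndexSequentAt (f : Lbl) (σ : List ℕ) : Prop :=
  ∃ S r, f σ = some (S, r) ∧ IndexSequent S

/-- A finite index path `p 0, …, p N` in `f`:  its first sequent is an index
    sequent, and a step to the left premise (child `0`) of a `(Case Add2)` rule
    only happens at switching points. -/
def IsIndexPathUpTo (f : Lbl) (p : ℕ → List ℕ) (N : ℕ) : Prop :=
  (∀ i, i ≤ N → f (p i) ≠ none) ∧
  (∀ i, i < N → ∃ n : ℕ, p (i + 1) = p i ++ [n]) ∧
  IndexSequentAt f (p 0) ∧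
  (∀ i, i < N → CaseAdd2At f (p i) → p (i + 1) = p i ++ [0] → SwitchingPoint f (p i))

/-- An infinite index path in `f`. -/
def IsInfIndexPath (f : Lbl) (p : ℕ → List ℕ) : Prop :=
  IsInfPath f p ∧
  IndexSequentAt f (p 0) ∧
  (∀ i, CaseAdd2At f (p i) → p (i + 1) = p i ++ [0] → SwitchingPoint f (p i))

/-- The child index chosen by the rightmost path: the right assumption of
    `(Case Add2)`, the unique premise otherwise. -/
def rightIdx : Rule → ℕ := fun r =>
  match r with
  | .caseAdd2 _ _ _ _ _ _ => 1
  | _ => 0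

/-- One step of the rightmost path in `f`. -/
def RightStep (f : Lbl) (σ σ' : List ℕ) : Prop :=
  ∃ S r, f σ = some (S, r) ∧ σ' = σ ++ [rightIdx r] ∧ f σ' ≠ none

/-- `A(Γ ⊢ Δ)` of Lemma `abc_relations`. -/
def Aset (S : Seq) : Set Tm :=
  {a | (∃ b c, Fm.add2 a b c ∈ S.ant) ∨ (∃ b c, Fm.add1 a b c ∈ S.suc) ∨ a = Tm.zero}

/-- `BC(Γ ⊢ Δ)` of Lemma `abc_relations`. -/
def BCset (S : Seq) : Set Tm :=
  {t | (∃ a c, Fm.add2 a t c ∈ S.ant) ∨ (∃ a b, Fm.add2 a b t ∈ S.ant) ∨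
       (∃ a c, Fm.add1 a t c ∈ S.suc) ∨ (∃ a b, Fm.add1 a b t ∈ S.suc)}

/-- The rules that can occur in a cut-free cycle-normal `CLKID^ω_a` proof of
    `Add2(x,y,z) ⊢ Add1(x,y,z)` (plus bud labels). -/
def allowedRule (r : Rule) : Prop :=
  r = Rule.bud ∨ r = Rule.weak ∨ (∃ θ, r = Rule.subst θ) ∨
  (∃ v1 v2 t u, r = Rule.eqLa v1 v2 t u) ∨
  (∃ a b c x y z, r = Rule.caseAdd2 a b c x y z) ∨
  r = Rule.add1R1 ∨ (∃ a b c, r = Rule.add1R2 a b c)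

/-! ### Auxiliary lemmas -/

lemma sIter_s (n : ℕ) (t : Tm) : sIter n (Tm.s t) = sIter (n+1) t := by
  induction n with
  | zero => rfl
  | succ n ih => simp only [sIter, ih]

lemma sIter_sIter (n m : ℕ) (t : Tm) : sIter n (sIter m t) = sIter (n+m) t := by
  induction n with
  | zero => simp [sIter]
  | succ n ih =>
    have : n + 1 + m = (n + m) + 1 := by omega
    rw [this]; simp only [sIter, ih]

lemma subst_sIter (θ : ℕ → Tm) (n : ℕ) (t : Tm) :
    (sIter n t).subst θ = sIter n (t.subst θ) := by
  induction n with
  | zero => rfl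
  | succ n ih => simp only [sIter, Tm.subst, ih]

lemma Tm.subst_id_of {t : Tm} {θ : ℕ → Tm} (h : ∀ v ∈ t.fv, θ v = Tm.var v) :
    t.subst θ = t := by
  induction t with
  | var x => exact h x rfl
  | zero => rfl
  | s t ih => simp only [Tm.subst]; rw [ih h]

lemma EqvTm.elim' {Γ : Set Fm} {R : Tm → Tm → Prop}
    (hbase : ∀ t u, Fm.eq t u ∈ Γ → R t u)
    (hrefl : ∀ t, R t t)
    (hsymm : ∀ t u, R t u → R u t)
    (htrans : ∀ t u v, R t u → R u v → R t v)
    (hs : ∀ t u, R t u → R (Tm.s t) (Tm.s u)) :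
    ∀ {t u}, EqvTm Γ t u → R t u := by
  intro t u h
  induction h with
  | base h => exact hbase _ _ h
  | refl t => exact hrefl t
  | symm _ ih => exact hsymm _ _ ih
  | trans _ _ ih1 ih2 => exact htrans _ _ _ ih1 ih2
  | sCongr _ ih => exact hs _ _ ih

lemma EqvTm.mono {Γ Γ' : Set Fm} (h : Γ ⊆ Γ') :
    ∀ {t u}, EqvTm Γ t u → EqvTm Γ' t u :=
  EqvTm.elim' (fun _ _ hm => .base (h hm)) .refl (fun _ _ => .symm)
    (fun _ _ _ => .trans) (fun _ _ => .sCongr)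

lemma EqvTm.sIterCongr {Γ : Set Fm} (n : ℕ) {t u : Tm} (h : EqvTm Γ t u) :
    EqvTm Γ (sIter n t) (sIter n u) := by
  induction n with
  | zero => exact h
  | succ n ih => exact ih.sCongr

lemma DepTm.refl {Γ : Set Fm} (t : Tm) : DepTm Γ t t := ⟨0, 0, .refl t⟩

lemma DepTm.of_eqv {Γ : Set Fm} {n m : ℕ} {t u : Tm}
    (h : EqvTm Γ (sIter n t) (sIter m u)) : DepTm Γ t u := ⟨n, m, h⟩

lemma DepTm.s_right {Γ : Set Fm} {t u : Tm} (h : DepTm Γ t u) : DepTm Γ t (Tm.s u) := by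
  obtain ⟨n, m, h⟩ := h
  refine ⟨n + 1, m, ?_⟩
  rw [sIter_s]
  have := h.sCongr
  simpa [sIter] using this

/-! ### Formula shapes -/

def Shaped (S : Seq) : Prop :=
  (∀ φ ∈ S.ant, (∃ t u, φ = Fm.eq t u) ∨ (∃ a b c, φ = Fm.add2 a b c)) ∧
  (∀ φ ∈ S.suc, ∃ a b c, φ = Fm.add1 a b c)

lemma subst_shape_eq {θ : ℕ → Tm} {φ : Fm} {t u : Tm} (h : Fm.subst θ φ = Fm.eq t u) :
    ∃ t' u', φ = Fm.eq t' u' ∧ t = t'.subst θ ∧ u = u'.subst θ := by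
  cases φ <;> simp only [Fm.subst] at h
  case eq t' u' =>
    injection h with h1 h2
    exact ⟨t', u', rfl, h1.symm, h2.symm⟩
  all_goals injection h

lemma subst_shape_add1 {θ : ℕ → Tm} {φ : Fm} {a b c : Tm} (h : Fm.subst θ φ = Fm.add1 a b c) :
    ∃ a' b' c', φ = Fm.add1 a' b' c' ∧ a = a'.subst θ ∧ b = b'.subst θ ∧ c = c'.subst θ := by
  cases φ <;> simp only [Fm.subst] at h
  case add1 a' b' c' =>
    injection h with h1 h2 h3
    exact ⟨a', b', c', rfl, h1.symm, h2.symm, h3.symm⟩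
  all_goals injection h

lemma subst_shape_add2 {θ : ℕ → Tm} {φ : Fm} {a b c : Tm} (h : Fm.subst θ φ = Fm.add2 a b c) :
    ∃ a' b' c', φ = Fm.add2 a' b' c' ∧ a = a'.subst θ ∧ b = b'.subst θ ∧ c = c'.subst θ := by
  cases φ <;> simp only [Fm.subst] at h
  case add2 a' b' c' =>
    injection h with h1 h2 h3
    exact ⟨a', b', c', rfl, h1.symm, h2.symm, h3.symm⟩
  all_goals injection h

lemma DepTm.mono {Γ Γ' : Set Fm} (h : Γ ⊆ Γ') {t u : Tm} :
    DepTm Γ t u → DepTm Γ' t u := fun ⟨n, m, he⟩ => ⟨n, m, he.mono h⟩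

lemma EqvTm.subst_map {Γ : Finset Fm} (θ : ℕ → Tm) {t u : Tm}
    (h : EqvTm (↑Γ) t u) :
    EqvTm (↑(Γ.image (Fm.subst θ))) (t.subst θ) (u.subst θ) := by
  refine EqvTm.elim' (R := fun t u => EqvTm (↑(Γ.image (Fm.subst θ))) (t.subst θ) (u.subst θ))
    ?_ ?_ ?_ ?_ ?_ h
  · intro t u hm
    refine .base ?_
    simp only [Finset.coe_image, Set.mem_image]
    exact ⟨Fm.eq t u, hm, rfl⟩
  · intro t; exact .refl _
  · intro _ _ h; exact h.symm
  · intro _ _ _ h1 h2; exact h1.trans h2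
  · intro t u h; exact h.sCongr

lemma swap_subst {A : Set Fm} {v1 v2 : ℕ} {t u : Tm} (hA : Fm.eq t u ∈ A) (w : Tm) :
    EqvTm A (w.subst (sub2 v1 v2 t u)) (w.subst (sub2 v1 v2 u t)) := by
  induction w with
  | var zz =>
    simp only [Tm.subst, sub2]
    by_cases h1 : zz = v1
    · simp only [h1, if_pos rfl]
      exact .base hA
    · by_cases h2 : zz = v2
      · subst h2
        simp only [if_neg h1, if_pos rfl]
        exact (EqvTm.base hA).symm
      · simp only [if_neg h1, if_neg h2]
        exact .refl _
  | zero => exact .refl _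
  | s w ih => exact ih.sCongr

lemma eqLa_transfer {Γ : Finset Fm} {v1 v2 : ℕ} {t u : Tm} {α β : Tm}
    (h : EqvTm (↑(insert (Fm.eq t u) (Γ.image (Fm.subst (sub2 v1 v2 u t))))) α β) :
    EqvTm (↑(insert (Fm.eq t u) (Γ.image (Fm.subst (sub2 v1 v2 t u))))) α β := by
  set A : Set Fm := ↑(insert (Fm.eq t u) (Γ.image (Fm.subst (sub2 v1 v2 t u)))) with hAdef
  have hA : Fm.eq t u ∈ A := by
    simp [hAdef]
  refine EqvTm.elim' (R := fun α β => EqvTm A α β) ?_ ?_ ?_ ?_ ?_ h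
  · intro p q hm
    simp only [Finset.coe_insert, Set.mem_insert_iff, Finset.mem_coe,
      Finset.mem_image] at hm
    rcases hm with hm | ⟨φ, hφ, hm⟩
    · injection hm with h1 h2
      subst h1; subst h2
      exact .base hA
    · obtain ⟨p', q', rfl, rfl, rfl⟩ := subst_shape_eq hm
      have hb : Fm.eq (p'.subst (sub2 v1 v2 t u)) (q'.subst (sub2 v1 v2 t u)) ∈ A := by
        simp only [hAdef, Finset.coe_insert, Set.mem_insert_iff, Finset.mem_coe,
          Finset.mem_image]
        exact Or.inr ⟨Fm.eq p' q', hφ, rfl⟩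
      exact ((swap_subst hA p').symm.trans (EqvTm.base hb)).trans (swap_subst hA q')
  · intro t; exact .refl _
  · intro _ _ h; exact h.symm
  · intro _ _ _ h1 h2; exact h1.trans h2
  · intro _ _ h; exact h.sCongr

/-- Number of occurrences of the variable `x` in a term. -/
def cntV (x : ℕ) : Tm → ℕ
  | .var y => if y = x then 1 else 0
  | .zero => 0
  | .s t => cntV x t

lemma cntV_sIter (x : ℕ) (n : ℕ) (t : Tm) : cntV x (sIter n t) = cntV x t := by
  induction n with
  | zero => rfl
  | succ n ih => simpa [sIter, cntV] using ih

lemma cntV_eq_zero {x : ℕ} {t : Tm} (h : x ∉ t.fv) : cntV x t = 0 := by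
  induction t with
  | var y =>
    have : y ≠ x := by rintro rfl; exact h rfl
    simp [cntV, this]
  | zero => rfl
  | s t ih => exact ih h

/-- The substitution `[x := a, y := b, z := c]`. -/
def rho3 (x y z : ℕ) (a b c : Tm) : ℕ → Tm :=
  fun v => if v = x then a else if v = y then b else if v = z then c else Tm.var v

lemma rho3_id {x y z : ℕ} {a b c : Tm} {t : Tm}
    (hx : x ∉ t.fv) (hy : y ∉ t.fv) (hz : z ∉ t.fv) :
    t.subst (rho3 x y z a b c) = t := by
  refine Tm.subst_id_of fun v hv => ?_
  have h1 : v ≠ x := by rintro rfl; exact hx hv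
  have h2 : v ≠ y := by rintro rfl; exact hy hv
  have h3 : v ≠ z := by rintro rfl; exact hz hv
  simp [rho3, h1, h2, h3]

lemma caseAdd2_transfer {Γ : Finset Fm} {a b c : Tm} {x y z : ℕ}
    (hxy : x ≠ y) (hxz : x ≠ z) (hyz : y ≠ z)
    (hxa : x ∉ a.fv) (hya : y ∉ a.fv) (hza : z ∉ a.fv)
    (hxb : x ∉ b.fv) (hyb : y ∉ b.fv) (hzb : z ∉ b.fv)
    (hxc : x ∉ c.fv) (hyc : y ∉ c.fv) (hzc : z ∉ c.fv)
    (hΓ : ∀ ψ ∈ Γ, x ∉ ψ.fv ∧ y ∉ ψ.fv ∧ z ∉ ψ.fv) {α β : Tm}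
    (h : EqvTm (↑(insert (Fm.eq a (Tm.s (Tm.var x))) (insert (Fm.eq b (Tm.var y))
        (insert (Fm.eq c (Tm.var z))
          (insert (Fm.add2 (Tm.var x) (Tm.s (Tm.var y)) (Tm.var z)) Γ))))) α β) :
    ∃ k l : ℕ,
      EqvTm (↑(insert (Fm.add2 a b c) Γ))
        (sIter k (α.subst (rho3 x y z a b c))) (sIter l (β.subst (rho3 x y z a b c))) ∧
      k + cntV x α = l + cntV x β := by
  set ρ := rho3 x y z a b c with hρ
  set A : Set Fm := ↑(insert (Fm.add2 a b c) Γ) with hAdef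
  refine EqvTm.elim' (R := fun α β => ∃ k l : ℕ,
      EqvTm A (sIter k (α.subst ρ)) (sIter l (β.subst ρ)) ∧
      k + cntV x α = l + cntV x β) ?_ ?_ ?_ ?_ ?_ h
  · intro p q hm
    simp only [Finset.coe_insert, Set.mem_insert_iff, Finset.mem_coe] at hm
    rcases hm with hm | hm | hm | hm | hm
    · -- eq a (s (var x))
      injection hm with h1 h2
      rw [h1, h2]
      refine ⟨1, 0, ?_, ?_⟩
      · have ha : a.subst (rho3 x y z a b c) = a := rho3_id hxa hya hza
        have hx' : (Tm.var x).subst (rho3 x y z a b c) = a := by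
          simp [rho3, Tm.subst]
        show EqvTm A (sIter 1 (a.subst ρ)) (sIter 0 (Tm.s ((Tm.var x).subst ρ)))
        rw [hρ, ha, hx']
        exact .refl _
      · simp [cntV, cntV_eq_zero hxa]
    · -- eq b (var y)
      injection hm with h1 h2
      rw [h1, h2]
      refine ⟨0, 0, ?_, ?_⟩
      · have hy' : (Tm.var y).subst (rho3 x y z a b c) = b := by
          simp [rho3, Tm.subst, Ne.symm hxy]
        show EqvTm A (sIter 0 (b.subst ρ)) (sIter 0 ((Tm.var y).subst ρ))
        rw [hρ, hy', rho3_id hxb hyb hzb]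
        exact .refl _
      · simp [cntV, Ne.symm hxy, cntV_eq_zero hxb]
    · -- eq c (var z)
      injection hm with h1 h2
      rw [h1, h2]
      refine ⟨0, 0, ?_, ?_⟩
      · have hz' : (Tm.var z).subst (rho3 x y z a b c) = c := by
          simp [rho3, Tm.subst, Ne.symm hxz, Ne.symm hyz]
        show EqvTm A (sIter 0 (c.subst ρ)) (sIter 0 ((Tm.var z).subst ρ))
        rw [hρ, hz', rho3_id hxc hyc hzc]
        exact .refl _
      · simp [cntV, Ne.symm hxz, cntV_eq_zero hxc]
    · exact absurd hm (by simp)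
    · -- in Γ
      obtain ⟨hx', hy', hz'⟩ := hΓ _ hm
      simp only [Fm.fv, Set.mem_union, not_or] at hx' hy' hz'
      refine ⟨0, 0, ?_, ?_⟩
      · show EqvTm A (sIter 0 (p.subst ρ)) (sIter 0 (q.subst ρ))
        rw [show p.subst ρ = p from rho3_id hx'.1 hy'.1 hz'.1,
            show q.subst ρ = q from rho3_id hx'.2 hy'.2 hz'.2]
        refine .base ?_
        simp only [hAdef, Finset.coe_insert, Set.mem_insert_iff, Finset.mem_coe]
        exact Or.inr hm
      · rw [cntV_eq_zero hx'.1, cntV_eq_zero hx'.2]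
  · intro t; exact ⟨0, 0, .refl _, rfl⟩
  · rintro t u ⟨k, l, he, hg⟩; exact ⟨l, k, he.symm, by omega⟩
  · rintro t u v ⟨k, l, h1, g1⟩ ⟨k', l', h2, g2⟩
    refine ⟨k' + k, l + l', ?_, by omega⟩
    have h1' := h1.sIterCongr k'
    rw [sIter_sIter, sIter_sIter] at h1'
    have h2' := h2.sIterCongr l
    rw [sIter_sIter, sIter_sIter] at h2'
    rw [show l + k' = k' + l from by omega] at h2'
    exact h1'.trans h2'
  · rintro t u ⟨k, l, he, hg⟩
    refine ⟨k, l, ?_, hg⟩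
    show EqvTm A (sIter k (Tm.s (t.subst ρ))) (sIter l (Tm.s (u.subst ρ)))
    rw [sIter_s, sIter_s]
    exact he.sCongr

lemma shaped_ant_clash {Γ Δ : Finset Fm} {φ : Fm}
    (hg : Shaped ⟨insert φ Γ, Δ⟩)
    (h1 : ∀ t u : Tm, φ ≠ Fm.eq t u) (h2 : ∀ a b c : Tm, φ ≠ Fm.add2 a b c) : False := by
  rcases hg.1 φ (Finset.mem_insert_self _ _) with ⟨t, u, he⟩ | ⟨a, b, c, he⟩
  exacts [h1 t u he, h2 a b c he]

lemma shaped_suc_clash {Γ Δ : Finset Fm} {φ : Fm}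
    (hg : Shaped ⟨Γ, insert φ Δ⟩) (h : ∀ a b c : Tm, φ ≠ Fm.add1 a b c) : False := by
  obtain ⟨a, b, c, he⟩ := hg.2 φ (Finset.mem_insert_self _ _)
  exact h a b c he

lemma shaped_goalSeq : Shaped goalSeq := by
  constructor
  · intro φ hφ
    simp only [goalSeq, Finset.mem_singleton] at hφ
    subst hφ
    exact Or.inr ⟨_, _, _, rfl⟩
  · intro φ hφ
    simp only [goalSeq, Finset.mem_singleton] at hφ
    subst hφ
    exact ⟨_, _, _, rfl⟩

lemma shaped_image_swap {Γ Δ : Finset Fm} {θ θ' : ℕ → Tm}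
    (h1 : ∀ φ ∈ Γ.image (Fm.subst θ), (∃ t u, φ = Fm.eq t u) ∨ ∃ a b c, φ = Fm.add2 a b c)
    (h2 : ∀ φ ∈ Δ.image (Fm.subst θ), ∃ a b c, φ = Fm.add1 a b c) :
    (∀ φ ∈ Γ.image (Fm.subst θ'), (∃ t u, φ = Fm.eq t u) ∨ ∃ a b c, φ = Fm.add2 a b c) ∧
    (∀ φ ∈ Δ.image (Fm.subst θ'), ∃ a b c, φ = Fm.add1 a b c) := by
  constructor
  · intro φ hφ
    obtain ⟨ψ, hψ, rfl⟩ := Finset.mem_image.1 hφ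
    rcases h1 (ψ.subst θ) (Finset.mem_image_of_mem _ hψ) with ⟨t', u', he⟩ | ⟨a, b, c, he⟩
    · obtain ⟨p, q, rfl, -, -⟩ := subst_shape_eq he
      exact Or.inl ⟨_, _, rfl⟩
    · obtain ⟨p, q, r', rfl, -⟩ := subst_shape_add2 he
      exact Or.inr ⟨_, _, _, rfl⟩
  · intro φ hφ
    obtain ⟨ψ, hψ, rfl⟩ := Finset.mem_image.1 hφ
    obtain ⟨a, b, c, he⟩ := h2 (ψ.subst θ) (Finset.mem_image_of_mem _ hψ)
    obtain ⟨p, q, r', rfl, -⟩ := subst_shape_add1 he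
    exact ⟨_, _, _, rfl⟩

lemma shaped_all {S : Seq} {r : Rule} {prems : List Seq}
    (hg : Shaped S) (hinf : Inf r S prems) (hcut : ∀ φ, r ≠ Rule.cut φ) :
    ∀ S' ∈ prems, Shaped S' := by
  cases hinf with
  | ax h => intro S' h'; simp at h'
  | weak hΓ hΔ =>
    intro S' h'; simp at h'; subst h'
    exact ⟨fun φ hφ => hg.1 φ (hΓ hφ), fun φ hφ => hg.2 φ (hΔ hφ)⟩
  | cut => exact absurd rfl (hcut _)
  | @subst Γ Δ θ =>
    intro S' h'; simp at h'; subst h'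
    constructor
    · intro φ hφ
      rcases hg.1 (φ.subst θ) (Finset.mem_image_of_mem _ hφ) with ⟨t, u, he⟩ | ⟨a, b, c, he⟩
      · obtain ⟨t', u', rfl, -, -⟩ := subst_shape_eq he
        exact Or.inl ⟨_, _, rfl⟩
      · obtain ⟨a', b', c', rfl, -⟩ := subst_shape_add2 he
        exact Or.inr ⟨_, _, _, rfl⟩
    · intro φ hφ
      obtain ⟨a, b, c, he⟩ := hg.2 (φ.subst θ) (Finset.mem_image_of_mem _ hφ)
      obtain ⟨a', b', c', rfl, -⟩ := subst_shape_add1 he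
      exact ⟨_, _, _, rfl⟩
  | negL => exact (shaped_ant_clash hg (by simp) (by simp)).elim
  | negR => exact (shaped_suc_clash hg (by simp)).elim
  | andL => exact (shaped_ant_clash hg (by simp) (by simp)).elim
  | andR => exact (shaped_suc_clash hg (by simp)).elim
  | orL => exact (shaped_ant_clash hg (by simp) (by simp)).elim
  | orR => exact (shaped_suc_clash hg (by simp)).elim
  | impL => exact (shaped_ant_clash hg (by simp) (by simp)).elim
  | impR => exact (shaped_suc_clash hg (by simp)).elim
  | allL => exact (shaped_ant_clash hg (by simp) (by simp)).elim
  | allR _ => exact (shaped_suc_clash hg (by simp)).elim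
  | exL _ => exact (shaped_ant_clash hg (by simp) (by simp)).elim
  | exR => exact (shaped_suc_clash hg (by simp)).elim
  | eqR => exact (shaped_suc_clash hg (by simp)).elim
  | @eqL Γ Δ v1 v2 t u =>
    intro S' h'; simp at h'; subst h'
    have h1 : ∀ φ ∈ Γ.image (Fm.subst (sub2 v1 v2 t u)),
        (∃ t u, φ = Fm.eq t u) ∨ ∃ a b c, φ = Fm.add2 a b c :=
      fun φ hφ => hg.1 φ (Finset.mem_insert_of_mem hφ)
    obtain ⟨g1, g2⟩ := shaped_image_swap (θ' := sub2 v1 v2 u t) h1 hg.2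
    exact ⟨g1, g2⟩
  | @eqLa Γ Δ v1 v2 t u =>
    intro S' h'; simp at h'; subst h'
    have h1 : ∀ φ ∈ Γ.image (Fm.subst (sub2 v1 v2 t u)),
        (∃ t u, φ = Fm.eq t u) ∨ ∃ a b c, φ = Fm.add2 a b c :=
      fun φ hφ => hg.1 φ (Finset.mem_insert_of_mem hφ)
    obtain ⟨g1, g2⟩ := shaped_image_swap (θ' := sub2 v1 v2 u t) h1 hg.2
    refine ⟨fun φ hφ => ?_, g2⟩
    rcases Finset.mem_insert.1 hφ with rfl | hφ
    · exact Or.inl ⟨_, _, rfl⟩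
    · exact g1 φ hφ
  | add1R1 => intro S' h'; simp at h'
  | @add1R2 Γ Δ a b c =>
    intro S' h'; simp at h'; subst h'
    refine ⟨hg.1, fun φ hφ => ?_⟩
    rcases Finset.mem_insert.1 hφ with rfl | hφ'
    · exact ⟨_, _, _, rfl⟩
    · exact hg.2 φ (Finset.mem_insert_of_mem hφ')
  | add2R1 => exact (shaped_suc_clash hg (by simp)).elim
  | add2R2 => exact (shaped_suc_clash hg (by simp)).elim
  | caseAdd1 _ _ _ _ => exact (shaped_ant_clash hg (by simp) (by simp)).elim
  | @caseAdd2 Γ Δ a b c x y z hxy hxz hyz hfr =>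
    intro S' h'
    have hΓ : ∀ φ ∈ Γ, (∃ t u, φ = Fm.eq t u) ∨ (∃ a' b' c', φ = Fm.add2 a' b' c') :=
      fun φ hφ => hg.1 φ (Finset.mem_insert_of_mem hφ)
    simp only [List.mem_cons, List.not_mem_nil, or_false] at h'
    rcases h' with rfl | rfl
    · refine ⟨fun φ hφ => ?_, hg.2⟩
      rcases Finset.mem_insert.1 hφ with rfl | hφ
      · exact Or.inl ⟨_, _, rfl⟩
      rcases Finset.mem_insert.1 hφ with rfl | hφ
      · exact Or.inl ⟨_, _, rfl⟩
      rcases Finset.mem_insert.1 hφ with rfl | hφ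
      · exact Or.inl ⟨_, _, rfl⟩
      exact hΓ φ hφ
    · refine ⟨fun φ hφ => ?_, hg.2⟩
      rcases Finset.mem_insert.1 hφ with rfl | hφ
      · exact Or.inl ⟨_, _, rfl⟩
      rcases Finset.mem_insert.1 hφ with rfl | hφ
      · exact Or.inl ⟨_, _, rfl⟩
      rcases Finset.mem_insert.1 hφ with rfl | hφ
      · exact Or.inl ⟨_, _, rfl⟩
      rcases Finset.mem_insert.1 hφ with rfl | hφ
      · exact Or.inr ⟨_, _, _, rfl⟩
      exact hΓ φ hφ

lemma step_main {S : Seq} {r : Rule} {prems : List Seq}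
    (hg : Shaped S) (hi : IndexSequent S) (hinf : Inf r S prems)
    (hcut : ∀ φ, r ≠ Rule.cut φ)
    (heqL : ∀ v1 v2 t u, r ≠ Rule.eqL v1 v2 t u) :
    ∃ S', prems[rightIdx r]? = some S' ∧ IndexSequent S' := by
  cases hinf with
  | ax h =>
    obtain ⟨φ, hφ⟩ := h
    obtain ⟨h1, h2⟩ := Finset.mem_inter.1 hφ
    rcases hg.1 φ h1 with ⟨t, u, rfl⟩ | ⟨a, b, c, rfl⟩ <;>
      obtain ⟨a', b', c', he⟩ := hg.2 _ h2 <;> simp at he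
  | @weak Γ Δ Γ' Δ' hΓ hΔ =>
    refine ⟨_, rfl, ?_, ?_⟩
    · rintro b ⟨a0, c0, h0⟩ u hu hdep
      refine hi.1 b ⟨a0, c0, hΔ h0⟩ u ?_ (hdep.mono (Finset.coe_subset.2 hΓ))
      rcases hu with ⟨a1, b1, h1⟩ | ⟨a1, b1, h1⟩
      · exact Or.inl ⟨a1, b1, hΓ h1⟩
      · exact Or.inr ⟨a1, b1, hΔ h1⟩
    · rintro b ⟨a0, c0, h0⟩ b' ⟨a0', c0', h0'⟩ n m he
      exact hi.2 b ⟨a0, c0, hΔ h0⟩ b' ⟨a0', c0', hΔ h0'⟩ n m (he.mono (Finset.coe_subset.2 hΓ))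
  | cut => exact absurd rfl (hcut _)
  | @subst Γ Δ θ =>
    refine ⟨_, rfl, ?_, ?_⟩
    · rintro b ⟨a0, c0, h0⟩ u hu hdep
      obtain ⟨n, m, he⟩ := hdep
      have he' := he.subst_map θ
      rw [subst_sIter, subst_sIter] at he'
      refine hi.1 (b.subst θ) ⟨a0.subst θ, c0.subst θ, Finset.mem_image.2 ⟨_, h0, rfl⟩⟩
        (u.subst θ) ?_ ⟨n, m, he'⟩
      rcases hu with ⟨a1, b1, h1⟩ | ⟨a1, b1, h1⟩
      · exact Or.inl ⟨a1.subst θ, b1.subst θ, Finset.mem_image.2 ⟨_, h1, rfl⟩⟩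
      · exact Or.inr ⟨a1.subst θ, b1.subst θ, Finset.mem_image.2 ⟨_, h1, rfl⟩⟩
    · rintro b ⟨a0, c0, h0⟩ b' ⟨a0', c0', h0'⟩ n m he
      have he' := he.subst_map θ
      rw [subst_sIter, subst_sIter] at he'
      exact hi.2 (b.subst θ) ⟨a0.subst θ, c0.subst θ, Finset.mem_image.2 ⟨_, h0, rfl⟩⟩
        (b'.subst θ) ⟨a0'.subst θ, c0'.subst θ, Finset.mem_image.2 ⟨_, h0', rfl⟩⟩ n m he'
  | negL => exact (shaped_ant_clash hg (by simp) (by simp)).elim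
  | negR => exact (shaped_suc_clash hg (by simp)).elim
  | andL => exact (shaped_ant_clash hg (by simp) (by simp)).elim
  | andR => exact (shaped_suc_clash hg (by simp)).elim
  | orL => exact (shaped_ant_clash hg (by simp) (by simp)).elim
  | orR => exact (shaped_suc_clash hg (by simp)).elim
  | impL => exact (shaped_ant_clash hg (by simp) (by simp)).elim
  | impR => exact (shaped_suc_clash hg (by simp)).elim
  | allL => exact (shaped_ant_clash hg (by simp) (by simp)).elim
  | allR _ => exact (shaped_suc_clash hg (by simp)).elim
  | exL _ => exact (shaped_ant_clash hg (by simp) (by simp)).elim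
  | exR => exact (shaped_suc_clash hg (by simp)).elim
  | eqR => exact (shaped_suc_clash hg (by simp)).elim
  | eqL => exact absurd rfl (heqL _ _ _ _)
  | @eqLa Γ Δ v1 v2 t u =>
    refine ⟨_, rfl, ?_, ?_⟩
    · rintro b0 ⟨a0, c0, h0⟩ u0 hu0 hdep
      obtain ⟨ψ, hψ, hs⟩ := Finset.mem_image.1 h0
      obtain ⟨a', b', c', rfl, rfl, rfl, rfl⟩ := subst_shape_add1 hs
      have hA : Fm.eq t u ∈
          (↑(insert (Fm.eq t u) (Γ.image (Fm.subst (sub2 v1 v2 t u)))) : Set Fm) := by simp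
      have hbS : (b'.subst (sub2 v1 v2 t u)) ∈
          B1 ⟨insert (Fm.eq t u) (Γ.image (Fm.subst (sub2 v1 v2 t u))),
              Δ.image (Fm.subst (sub2 v1 v2 t u))⟩ :=
        ⟨a'.subst (sub2 v1 v2 t u), c'.subst (sub2 v1 v2 t u),
          Finset.mem_image.2 ⟨_, hψ, rfl⟩⟩
      have hb : EqvTm _ (b'.subst (sub2 v1 v2 u t)) (b'.subst (sub2 v1 v2 t u)) :=
        (swap_subst hA b').symm
      obtain ⟨n, m, he⟩ := hdep
      have he' := eqLa_transfer he
      rcases hu0 with ⟨a1, b1, h1⟩ | ⟨a1, b1, h1⟩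
      · rcases Finset.mem_insert.1 h1 with hcl | h1'
        · exact absurd hcl (by simp)
        obtain ⟨ψ2, hψ2, hs2⟩ := Finset.mem_image.1 h1'
        obtain ⟨a2, b2, c2, rfl, -, -, rfl⟩ := subst_shape_add2 hs2
        have hu : EqvTm _ (c2.subst (sub2 v1 v2 u t)) (c2.subst (sub2 v1 v2 t u)) :=
          (swap_subst hA c2).symm
        refine hi.1 _ hbS (c2.subst (sub2 v1 v2 t u))
          (Or.inl ⟨a2.subst (sub2 v1 v2 t u), b2.subst (sub2 v1 v2 t u),
            Finset.mem_insert_of_mem (Finset.mem_image.2 ⟨_, hψ2, rfl⟩)⟩)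
          ⟨n, m, ((hb.sIterCongr n).symm.trans he').trans (hu.sIterCongr m)⟩
      · obtain ⟨ψ2, hψ2, hs2⟩ := Finset.mem_image.1 h1
        obtain ⟨a2, b2, c2, rfl, -, -, rfl⟩ := subst_shape_add1 hs2
        have hu : EqvTm _ (c2.subst (sub2 v1 v2 u t)) (c2.subst (sub2 v1 v2 t u)) :=
          (swap_subst hA c2).symm
        refine hi.1 _ hbS (c2.subst (sub2 v1 v2 t u))
          (Or.inr ⟨a2.subst (sub2 v1 v2 t u), b2.subst (sub2 v1 v2 t u),
            Finset.mem_image.2 ⟨_, hψ2, rfl⟩⟩)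
          ⟨n, m, ((hb.sIterCongr n).symm.trans he').trans (hu.sIterCongr m)⟩
    · rintro b0 ⟨a0, c0, h0⟩ b0' ⟨a0', c0', h0'⟩ n m he
      obtain ⟨ψ, hψ, hs⟩ := Finset.mem_image.1 h0
      obtain ⟨a', b', c', rfl, rfl, rfl, rfl⟩ := subst_shape_add1 hs
      obtain ⟨ψ2, hψ2, hs2⟩ := Finset.mem_image.1 h0'
      obtain ⟨a2, b2, c2, rfl, rfl, rfl, rfl⟩ := subst_shape_add1 hs2
      have hA : Fm.eq t u ∈
          (↑(insert (Fm.eq t u) (Γ.image (Fm.subst (sub2 v1 v2 t u)))) : Set Fm) := by simp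
      have hb : EqvTm _ (b'.subst (sub2 v1 v2 u t)) (b'.subst (sub2 v1 v2 t u)) :=
        (swap_subst hA b').symm
      have hb2 : EqvTm _ (b2.subst (sub2 v1 v2 u t)) (b2.subst (sub2 v1 v2 t u)) :=
        (swap_subst hA b2).symm
      have he' := eqLa_transfer he
      exact hi.2 _ ⟨a'.subst (sub2 v1 v2 t u), c'.subst (sub2 v1 v2 t u),
          Finset.mem_image.2 ⟨_, hψ, rfl⟩⟩
        _ ⟨a2.subst (sub2 v1 v2 t u), c2.subst (sub2 v1 v2 t u),
          Finset.mem_image.2 ⟨_, hψ2, rfl⟩⟩ n m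
        (((hb.sIterCongr n).symm.trans he').trans (hb2.sIterCongr m))
  | @add1R1 Γ Δ b =>
    exact absurd (DepTm.refl b)
      (hi.1 b ⟨_, _, Finset.mem_insert_self _ _⟩ b (Or.inr ⟨_, _, Finset.mem_insert_self _ _⟩))
  | @add1R2 Γ Δ a b c =>
    have key : ∀ b0 : Tm, (∃ a0 c0, Fm.add1 a0 b0 c0 ∈ insert (Fm.add1 a b c) Δ) →
        ∃ a0 c0, Fm.add1 a0 b0 c0 ∈ insert (Fm.add1 (Tm.s a) b (Tm.s c)) Δ := by
      rintro b0 ⟨a0, c0, h0⟩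
      rcases Finset.mem_insert.1 h0 with he | h0'
      · injection he with h1 h2 h3
        subst h2
        exact ⟨Tm.s a, Tm.s c, Finset.mem_insert_self _ _⟩
      · exact ⟨a0, c0, Finset.mem_insert_of_mem h0'⟩
    refine ⟨_, rfl, ?_, ?_⟩
    · rintro b0 hb0 u hu hdep
      rcases hu with ⟨a1, b1, h1⟩ | ⟨a1, b1, h1⟩
      · exact hi.1 b0 (key b0 hb0) u (Or.inl ⟨a1, b1, h1⟩) hdep
      · rcases Finset.mem_insert.1 h1 with he | h1'
        · injection he with g1 g2 g3
          subst g3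
          exact hi.1 b0 (key b0 hb0) (Tm.s u)
            (Or.inr ⟨Tm.s a, b, Finset.mem_insert_self _ _⟩) hdep.s_right
        · exact hi.1 b0 (key b0 hb0) u (Or.inr ⟨a1, b1, Finset.mem_insert_of_mem h1'⟩) hdep
    · rintro b0 hb0 b0' hb0' n m he
      exact hi.2 b0 (key b0 hb0) b0' (key b0' hb0') n m he
  | add2R1 => exact (shaped_suc_clash hg (by simp)).elim
  | add2R2 => exact (shaped_suc_clash hg (by simp)).elim
  | caseAdd1 _ _ _ _ => exact (shaped_ant_clash hg (by simp) (by simp)).elim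
  | @caseAdd2 Γ Δ a b c x y z hxy hxz hyz hfr =>
    have h0 := hfr _ (Finset.mem_insert_self _ _)
    simp only [Fm.fv, Set.mem_union, not_or] at h0
    obtain ⟨⟨⟨hxa, hxb⟩, hxc⟩, ⟨⟨hya, hyb⟩, hyc⟩, ⟨⟨hza, hzb⟩, hzc⟩⟩ := h0
    have hΓfr : ∀ ψ ∈ Γ, x ∉ ψ.fv ∧ y ∉ ψ.fv ∧ z ∉ ψ.fv :=
      fun ψ hψ => hfr ψ (Finset.mem_insert_of_mem (Finset.mem_union_left _ hψ))
    have hΔfr : ∀ ψ ∈ Δ, x ∉ ψ.fv ∧ y ∉ ψ.fv ∧ z ∉ ψ.fv :=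
      fun ψ hψ => hfr ψ (Finset.mem_insert_of_mem (Finset.mem_union_right _ hψ))
    refine ⟨_, rfl, ?_, ?_⟩
    · rintro b0 ⟨a0, c0, h0⟩ u hu hdep
      have hf := hΔfr _ h0
      simp only [Fm.fv, Set.mem_union, not_or] at hf
      obtain ⟨⟨⟨-, hxb0⟩, -⟩, ⟨⟨-, hyb0⟩, -⟩, ⟨⟨-, hzb0⟩, -⟩⟩ := hf
      obtain ⟨n, m, he⟩ := hdep
      obtain ⟨k, l, hE, -⟩ :=
        caseAdd2_transfer hxy hxz hyz hxa hya hza hxb hyb hzb hxc hyc hzc hΓfr he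
      rw [subst_sIter, subst_sIter, rho3_id hxb0 hyb0 hzb0, sIter_sIter, sIter_sIter] at hE
      have hbS : b0 ∈ B1 ⟨insert (Fm.add2 a b c) Γ, Δ⟩ := ⟨a0, c0, h0⟩
      rcases hu with ⟨a1, b1, h1⟩ | ⟨a1, b1, h1⟩
      · rcases Finset.mem_insert.1 h1 with hcl | h1
        · exact absurd hcl (by simp)
        rcases Finset.mem_insert.1 h1 with hcl | h1
        · exact absurd hcl (by simp)
        rcases Finset.mem_insert.1 h1 with hcl | h1
        · exact absurd hcl (by simp)
        rcases Finset.mem_insert.1 h1 with hcl | h1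
        · injection hcl with g1 g2 g3
          rw [g3] at hE
          rw [show (Tm.var z).subst (rho3 x y z a b c) = c by
            simp [rho3, Tm.subst, Ne.symm hxz, Ne.symm hyz]] at hE
          exact hi.1 b0 hbS c (Or.inl ⟨a, b, Finset.mem_insert_self _ _⟩) ⟨k + n, l + m, hE⟩
        · obtain ⟨hx1, hy1, hz1⟩ := hΓfr _ h1
          simp only [Fm.fv, Set.mem_union, not_or] at hx1 hy1 hz1
          rw [rho3_id hx1.2 hy1.2 hz1.2] at hE
          exact hi.1 b0 hbS u
            (Or.inl ⟨a1, b1, Finset.mem_insert_of_mem h1⟩) ⟨k + n, l + m, hE⟩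
      · obtain ⟨hx1, hy1, hz1⟩ := hΔfr _ h1
        simp only [Fm.fv, Set.mem_union, not_or] at hx1 hy1 hz1
        rw [rho3_id hx1.2 hy1.2 hz1.2] at hE
        exact hi.1 b0 hbS u (Or.inr ⟨a1, b1, h1⟩) ⟨k + n, l + m, hE⟩
    · rintro b0 ⟨a0, c0, h0⟩ b0' ⟨a0', c0', h0'⟩ n m he
      have hf := hΔfr _ h0
      have hf' := hΔfr _ h0'
      simp only [Fm.fv, Set.mem_union, not_or] at hf hf'
      obtain ⟨⟨⟨-, hxb0⟩, -⟩, ⟨⟨-, hyb0⟩, -⟩, ⟨⟨-, hzb0⟩, -⟩⟩ := hf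
      obtain ⟨⟨⟨-, hxb0'⟩, -⟩, ⟨⟨-, hyb0'⟩, -⟩, ⟨⟨-, hzb0'⟩, -⟩⟩ := hf'
      obtain ⟨k, l, hE, hgrad⟩ :=
        caseAdd2_transfer hxy hxz hyz hxa hya hza hxb hyb hzb hxc hyc hzc hΓfr he
      rw [cntV_sIter, cntV_sIter, cntV_eq_zero hxb0, cntV_eq_zero hxb0'] at hgrad
      rw [subst_sIter, subst_sIter, rho3_id hxb0 hyb0 hzb0, rho3_id hxb0' hyb0' hzb0',
        sIter_sIter, sIter_sIter] at hE
      have := hi.2 b0 ⟨a0, c0, h0⟩ b0' ⟨a0', c0', h0'⟩ (k + n) (l + m) hE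
      omega

lemma strict_prefix_length {σ τ : List ℕ} (h : σ <+: τ) (hne : σ ≠ τ) :
    σ.length < τ.length :=
  lt_of_le_of_ne h.length_le fun he => hne (List.IsPrefix.eq_of_length h he)

lemma resolve_some (P : PreProof) (hcn : P.CycleNormal) (T : Lbl) (hT : IsUnfolding P T)
    (σ : List ℕ) {S : Seq} {r : Rule} (h : P.D.label σ = some (S, r)) :
    ∃ δ S' r', P.D.label δ = some (S', r') ∧ r' ≠ Rule.bud ∧
      ∀ τ, T (σ ++ τ) = T (δ ++ τ) := by
  by_cases hb : r = Rule.bud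
  · subst hb
    obtain ⟨r', hC, hr'⟩ := P.comp σ S h
    exact ⟨P.C σ, S, r', hC, hr', fun τ => hT.2.1 σ τ ⟨S, h⟩⟩
  · exact ⟨σ, S, r, h, hb, fun τ => rfl⟩

lemma resolve (P : PreProof) (hcn : P.CycleNormal) (T : Lbl) (hT : IsUnfolding P T) :
    ∀ N σ, σ.length ≤ N → T σ ≠ none → ∃ δ S r, P.D.label δ = some (S, r) ∧
      r ≠ Rule.bud ∧ ∀ τ, T (σ ++ τ) = T (δ ++ τ) := by
  intro N
  induction N with
  | zero =>
    intro σ hlen _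
    have hσ0 : σ = [] := by
      cases σ with
      | nil => rfl
      | cons a l => simp at hlen
    subst hσ0
    obtain ⟨SR, hSR⟩ := Option.ne_none_iff_exists'.1 P.D.root_def
    exact resolve_some P hcn T hT [] (S := SR.1) (r := SR.2) (by rw [hSR])
  | succ N ih =>
    intro σ hlen hne
    cases hD : P.D.label σ with
    | some SR => exact resolve_some P hcn T hT σ (S := SR.1) (r := SR.2) (by rw [hD])
    | none =>
      by_cases hbud : ∀ σ₁, σ₁ <+: σ → ¬ budAt P.D.label σ₁
      · exact absurd (hT.2.2 σ hD hbud) hne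
      push_neg at hbud
      obtain ⟨σ₁, hpre, hb⟩ := hbud
      obtain ⟨σ₂, rfl⟩ := hpre
      obtain ⟨S₁, hS₁⟩ := hb
      obtain ⟨r', hC, hr'⟩ := P.comp σ₁ S₁ hS₁
      have hCpre : P.C σ₁ <+: σ₁ := hcn σ₁ S₁ hS₁
      have hCne : P.C σ₁ ≠ σ₁ := by
        intro he
        rw [he] at hC
        rw [hS₁] at hC
        injection hC with h'
        exact hr' (congrArg Prod.snd h').symm
      have hlt : (P.C σ₁).length < σ₁.length := strict_prefix_length hCpre hCne
      have hkey : ∀ τ, T ((σ₁ ++ σ₂) ++ τ) = T ((P.C σ₁ ++ σ₂) ++ τ) := by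
        intro τ
        rw [List.append_assoc, List.append_assoc]
        exact hT.2.1 σ₁ (σ₂ ++ τ) ⟨S₁, hS₁⟩
      have hne' : T (P.C σ₁ ++ σ₂) ≠ none := by
        have h0 := hkey []
        simp only [List.append_nil] at h0
        rw [← h0]
        exact hne
      have hlen' : (P.C σ₁ ++ σ₂).length ≤ N := by
        simp only [List.length_append] at hlen ⊢
        omega
      obtain ⟨δ, S, r, h1, h2, h3⟩ := ih (P.C σ₁ ++ σ₂) hlen' hne'
      exact ⟨δ, S, r, h1, h2, fun τ => (hkey τ).trans (h3 τ)⟩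

lemma shaped_D (P : PreProof) (hcf : P.CutFree) (hconcl : P.Concl goalSeq) :
    ∀ σ S r, P.D.label σ = some (S, r) → Shaped S := by
  intro σ
  induction σ using List.reverseRecOn with
  | nil =>
    intro S r h
    obtain ⟨r₀, h₀⟩ := hconcl
    rw [h₀] at h
    injection h with h'
    rw [show S = goalSeq from (congrArg Prod.fst h').symm]
    exact shaped_goalSeq
  | append_singleton σ j ih =>
    intro S r h
    have hne : P.D.label σ ≠ none := P.D.prefix_closed σ [j] (by rw [h]; simp)
    obtain ⟨p, hD⟩ := Option.ne_none_iff_exists'.1 hne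
    rcases P.D.wf σ p.1 p.2 (by rw [hD]) with ⟨-, hch⟩ | ⟨hnb, prems, hinf, hch, hnone⟩
    · exact absurd h (by rw [hch j]; simp)
    by_cases hlt : j < prems.length
    · obtain ⟨r'', hj⟩ := hch ⟨j, hlt⟩
      have hj' : P.D.label (σ ++ [j]) = some (prems.get ⟨j, hlt⟩, r'') := hj
      rw [hj'] at h
      injection h with h'
      have hScase : S = prems.get ⟨j, hlt⟩ := (congrArg Prod.fst h').symm
      have hcut : ∀ φ, p.2 ≠ Rule.cut φ := by
        intro φ hh
        exact hcf ⟨σ, p.1, p.2, by rw [hD], φ, hh⟩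
      rw [hScase]
      exact shaped_all (ih p.1 p.2 (by rw [hD])) hinf hcut _ (List.get_mem _ _)
    · exact absurd h (by rw [hnone j (le_of_not_gt hlt)]; simp)

/-- In the tree-unfolding of a cut-free cycle-normal
    `CLKID^ω_a` proof of `Add2(x,y,z) ⊢ Add1(x,y,z)`, the rightmost path from
    any node labeled with an index sequent is infinite. -/
theorem rightmost_path_infinite (P : PreProof) (hP : IsCNProofOfGoal P)
    (T : Lbl) (hT : IsUnfolding P T)
    (σ : List ℕ) (hσ : IndexSequentAt T σ) :
    ∃ p : ℕ → List ℕ, p 0 = σ ∧ ∀ i, RightStep T (p i) (p (i + 1)) := by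
  obtain ⟨-, hcf, hnoeqL, hcn, hconcl⟩ := hP
  have hres := resolve P hcn T hT
  -- the invariant-preserving step
  have key : ∀ τ S r, T τ = some (S, r) → Shaped S → IndexSequent S →
      ∃ S' r', T (τ ++ [rightIdx r]) = some (S', r') ∧ Shaped S' ∧ IndexSequent S' := by
    intro τ S r hTτ hg hi
    obtain ⟨δ, S₀, r₀, hD, hnb, heq⟩ := hres τ.length τ le_rfl (by rw [hTτ]; simp)
    have hTδ : T δ = P.D.label δ := by
      refine hT.1 δ (by rw [hD]; simp) ?_
      rintro ⟨S', hS'⟩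
      rw [hD] at hS'
      injection hS' with h'
      exact hnb (congrArg Prod.snd h')
    have hTτδ : T τ = T δ := by
      have h0 := heq []
      simpa using h0
    have hsome : some (S, r) = some (S₀, r₀) := by rw [← hTτ, hTτδ, hTδ, hD]
    injection hsome with h'
    have h1 : S = S₀ := congrArg Prod.fst h'
    have h2 : r = r₀ := congrArg Prod.snd h'
    subst h1; subst h2
    have hcut : ∀ φ, r ≠ Rule.cut φ := fun φ hh => hcf ⟨δ, S, r, hD, φ, hh⟩
    have heqLr : ∀ v1 v2 t u, r ≠ Rule.eqL v1 v2 t u :=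
      fun v1 v2 t u hh => hnoeqL ⟨δ, S, r, hD, v1, v2, t, u, hh⟩
    rcases P.D.wf δ S r hD with ⟨hbud, -⟩ | ⟨-, prems, hinf, hch, -⟩
    · exact absurd hbud hnb
    obtain ⟨S', hget, hidx⟩ := step_main hg hi hinf hcut heqLr
    have hlt : rightIdx r < prems.length := by
      by_contra hge
      rw [List.getElem?_eq_none (le_of_not_gt hge)] at hget
      exact absurd hget (by simp)
    have hgeteq : prems.get ⟨rightIdx r, hlt⟩ = S' := by
      rw [List.getElem?_eq_getElem hlt] at hget
      injection hget
    obtain ⟨r'', hj⟩ := hch ⟨rightIdx r, hlt⟩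
    have hj' : P.D.label (δ ++ [rightIdx r]) = some (S', r'') := by
      rw [← hgeteq]; exact hj
    have hshape : Shaped S' := by
      refine shaped_all hg hinf hcut S' ?_
      rw [← hgeteq]
      exact List.get_mem _ _
    have hTchild : T (τ ++ [rightIdx r]) = T (δ ++ [rightIdx r]) := heq [rightIdx r]
    by_cases hb : r'' = Rule.bud
    · subst hb
      obtain ⟨r₃, hC3, hr3⟩ := P.comp _ _ hj'
      have hTC : T (P.C (δ ++ [rightIdx r])) = some (S', r₃) := by
        rw [hT.1 _ (by rw [hC3]; simp) ?_, hC3]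
        rintro ⟨S₄, hS₄⟩
        rw [hC3] at hS₄
        injection hS₄ with h₄
        exact hr3 (congrArg Prod.snd h₄)
      have hstep : T ((δ ++ [rightIdx r]) ++ []) = T (P.C (δ ++ [rightIdx r]) ++ []) :=
        hT.2.1 _ [] ⟨S', hj'⟩
      simp only [List.append_nil] at hstep
      exact ⟨S', r₃, by rw [hTchild, hstep, hTC], hshape, hidx⟩
    · have hTd : T (δ ++ [rightIdx r]) = some (S', r'') := by
        rw [hT.1 _ (by rw [hj']; simp) ?_, hj']
        rintro ⟨S₄, hS₄⟩
        rw [hj'] at hS₄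
        injection hS₄ with h₄
        exact hb (congrArg Prod.snd h₄)
      exact ⟨S', r'', by rw [hTchild, hTd], hshape, hidx⟩
  -- the initial node satisfies the invariant
  obtain ⟨S0, r0, hT0, hi0⟩ := hσ
  have hg0 : Shaped S0 := by
    obtain ⟨δ, S₀, r₀, hD, hnb, heq⟩ := hres σ.length σ le_rfl (by rw [hT0]; simp)
    have hTδ : T δ = P.D.label δ := by
      refine hT.1 δ (by rw [hD]; simp) ?_
      rintro ⟨S', hS'⟩
      rw [hD] at hS'
      injection hS' with h'
      exact hnb (congrArg Prod.snd h')
    have hTτδ : T σ = T δ := by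
      have h0 := heq []
      simpa using h0
    have hsome : some (S0, r0) = some (S₀, r₀) := by rw [← hT0, hTτδ, hTδ, hD]
    injection hsome with h'
    rw [show S0 = S₀ from congrArg Prod.fst h']
    exact shaped_D P hcf hconcl δ S₀ r₀ hD
  -- build the infinite path by iteration
  have step : ∀ q : {τ : List ℕ // ∃ S r, T τ = some (S, r) ∧ Shaped S ∧ IndexSequent S},
      ∃ q' : {τ : List ℕ // ∃ S r, T τ = some (S, r) ∧ Shaped S ∧ IndexSequent S},
        RightStep T q.1 q'.1 := by
    rintro ⟨τ, S, r, hTτ, hg, hi⟩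
    obtain ⟨S', r', hT', hg', hi'⟩ := key τ S r hTτ hg hi
    exact ⟨⟨τ ++ [rightIdx r], S', r', hT', hg', hi'⟩,
      ⟨S, r, hTτ, rfl, by rw [hT']; simp⟩⟩
  choose F hF using step
  refine ⟨fun i => (F^[i] ⟨σ, S0, r0, hT0, hg0, hi0⟩).1, rfl, fun i => ?_⟩
  have hit : F^[i+1] ⟨σ, S0, r0, hT0, hg0, hi0⟩ = F (F^[i] ⟨σ, S0, r0, hT0, hg0, hi0⟩) :=
    Function.iterate_succ_apply' F i _
  simp only [hit]
  exact hF _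

end CLKID
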